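/- Let g, h ∈ R^n be nonzero vectors with cosine similarity ρ = ⟨g,h⟩/(‖g‖‖h‖), and let S be a real n×n matrix with ‖S‖ ≤ 1/τ (τ > 0) and v^T S v ≥ m‖v‖² for all v (m > 0). If ρ < −1/√(1 + m²τ²), then ⟨g, S h⟩ < 0. -/

import Mathlib

open scoped RealInnerProductSpace

/-- If `ρ = cos(g,h)` is below `-1/√(1+m²τ²)` and the linear map `S` satisfies
`‖S‖ ≤ 1/τ` and `⟪v, S v⟫ ≥ m‖v‖²`, then `⟪g, S h⟫ < 0`. -/
theorem inner_S_neg_of_cosine_small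
    {n : ℕ} (g h : EuclideanSpace ℝ (Fin n)) (hg : g ≠ 0) (hh : h ≠ 0)
    (S : EuclideanSpace ℝ (Fin n) →L[ℝ] EuclideanSpace ℝ (Fin n))
    (τ m : ℝ) (hτ : 0 < τ) (hm : 0 < m)
    (hSnorm : ‖S‖ ≤ 1 / τ)
    (hSpos : ∀ v : EuclideanSpace ℝ (Fin n), m * ‖v‖ ^ 2 ≤ ⟪v, S v⟫)
    (ρ : ℝ) (hρ : ρ = ⟪g, h⟫ / (‖g‖ * ‖h‖))
    (hsmall : ρ < -(1 / Real.sqrt (1 + m ^ 2 * τ ^ 2))) :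
    ⟪g, S h⟫ < 0 := by
  have hgn : (0:ℝ) < ‖g‖ := norm_pos_iff.mpr hg
  have hhn : (0:ℝ) < ‖h‖ := norm_pos_iff.mpr hh
  -- √(1+m²τ²) facts
  have hs2 : (0:ℝ) < 1 + m ^ 2 * τ ^ 2 := by positivity
  have hssq : Real.sqrt (1 + m ^ 2 * τ ^ 2) ^ 2 = 1 + m ^ 2 * τ ^ 2 :=
    Real.sq_sqrt hs2.le
  have hspos : (0:ℝ) < Real.sqrt (1 + m ^ 2 * τ ^ 2) := Real.sqrt_pos.mpr hs2
  have hρneg : ρ < 0 := by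
    have : (0:ℝ) < 1 / Real.sqrt (1 + m ^ 2 * τ ^ 2) := by positivity
    linarith
  have hρsq : 1 < ρ ^ 2 * (1 + m ^ 2 * τ ^ 2) := by
    have h1 : 1 / Real.sqrt (1 + m ^ 2 * τ ^ 2) < -ρ := by linarith
    have h2 : (1 / Real.sqrt (1 + m ^ 2 * τ ^ 2)) ^ 2 < (-ρ) ^ 2 := by
      apply pow_lt_pow_left₀ h1 (by positivity)
      norm_num
    rw [div_pow, hssq, one_pow, neg_sq] at h2
    exact (div_lt_iff₀ hs2).mp h2
  -- decomposition
  set a : ℝ := ⟪g, h⟫ / ‖g‖ ^ 2 with ha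
  set w : EuclideanSpace ℝ (Fin n) := h - a • g with hw
  have hdecomp : h = a • g + w := by simp [hw]
  have hag : a * ‖g‖ ^ 2 = ⟪g, h⟫ := by
    rw [ha, div_mul_cancel₀ _ (by positivity)]
  have hgw : ⟪g, w⟫ = 0 := by
    rw [hw, inner_sub_right, real_inner_smul_right, real_inner_self_eq_norm_sq]
    linarith [hag]
  clear_value a w
  have hghρ : ⟪g, h⟫ = ρ * (‖g‖ * ‖h‖) := by
    rw [hρ]; field_simp
  have haρ : a * ‖g‖ ^ 2 = ρ * (‖g‖ * ‖h‖) := by rw [hag, hghρ]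
  -- norm of w
  have hwsq : ‖w‖ ^ 2 = ‖h‖ ^ 2 * (1 - ρ ^ 2) := by
    have hpyth : ‖h‖ ^ 2 = ‖a • g‖ ^ 2 + 2 * ⟪a • g, w⟫ + ‖w‖ ^ 2 := by
      conv_lhs => rw [hdecomp]
      rw [← norm_add_sq_real]
    have hzw : ⟪a • g, w⟫ = 0 := by rw [real_inner_smul_left, hgw, mul_zero]
    rw [hzw] at hpyth
    have hag2 : ‖a • g‖ ^ 2 = a ^ 2 * ‖g‖ ^ 2 := by
      rw [norm_smul, mul_pow, Real.norm_eq_abs, sq_abs]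
    have ha2 : a ^ 2 * ‖g‖ ^ 2 = ρ ^ 2 * ‖h‖ ^ 2 := by
      have hg2 : (0:ℝ) < ‖g‖ ^ 2 := by positivity
      have h4 : (a * ‖g‖ ^ 2) ^ 2 = (ρ * (‖g‖ * ‖h‖)) ^ 2 := by rw [haρ]
      have key : a ^ 2 * ‖g‖ ^ 2 * ‖g‖ ^ 2 = ρ ^ 2 * ‖h‖ ^ 2 * ‖g‖ ^ 2 := by
        linear_combination h4
      exact mul_right_cancel₀ (ne_of_gt hg2) key
    rw [hag2, ha2] at hpyth
    linear_combination -hpyth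
  -- bound ‖w‖ < -m τ ρ ‖h‖
  have hwlt : ‖w‖ < -(m * τ * ρ) * ‖h‖ := by
    have hrhs : (0:ℝ) < -(m * τ * ρ) * ‖h‖ := by
      have h0 : 0 < -ρ := by linarith
      calc (0:ℝ) < m * τ * -ρ * ‖h‖ := mul_pos (mul_pos (mul_pos hm hτ) h0) hhn
      _ = -(m * τ * ρ) * ‖h‖ := by ring
    have hsq : ‖w‖ ^ 2 < (-(m * τ * ρ) * ‖h‖) ^ 2 := by
      rw [hwsq]
      have hkey : (1 - ρ ^ 2) * ‖h‖ ^ 2 < m ^ 2 * τ ^ 2 * ρ ^ 2 * ‖h‖ ^ 2 := by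
        apply mul_lt_mul_of_pos_right _ (by positivity)
        have hexp : ρ ^ 2 * (1 + m ^ 2 * τ ^ 2) = ρ ^ 2 + m ^ 2 * τ ^ 2 * ρ ^ 2 := by ring
        linarith [hρsq, hexp]
      have he : (-(m * τ * ρ) * ‖h‖) ^ 2 = m ^ 2 * τ ^ 2 * ρ ^ 2 * ‖h‖ ^ 2 := by ring
      have he2 : ‖h‖ ^ 2 * (1 - ρ ^ 2) = (1 - ρ ^ 2) * ‖h‖ ^ 2 := by ring
      linarith [hkey, he, he2]
    exact lt_of_pow_lt_pow_left₀ 2 hrhs.le hsq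
  -- compute ⟪g, S h⟫
  have hsum : ⟪g, S h⟫ = a * ⟪g, S g⟫ + ⟪g, S w⟫ := by
    conv_lhs => rw [hdecomp]
    rw [map_add, map_smul, inner_add_right, real_inner_smul_right]
  have hSg : m * ‖g‖ ^ 2 ≤ ⟪g, S g⟫ := hSpos g
  have haneg : a < 0 := by
    have h5 : a * ‖g‖ ^ 2 < 0 := by
      rw [haρ]; exact mul_neg_of_neg_of_pos hρneg (mul_pos hgn hhn)
    by_contra hc
    push_neg at hc
    exact absurd (mul_nonneg hc (sq_nonneg ‖g‖)) (not_le.mpr h5)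
  have hb1 : a * ⟪g, S g⟫ ≤ a * (m * ‖g‖ ^ 2) :=
    mul_le_mul_of_nonpos_left hSg haneg.le
  have hb2 : ⟪g, S w⟫ ≤ ‖g‖ * (1 / τ * ‖w‖) := by
    calc ⟪g, S w⟫ ≤ ‖g‖ * ‖S w‖ := real_inner_le_norm g (S w)
    _ ≤ ‖g‖ * (1 / τ * ‖w‖) := by
        apply mul_le_mul_of_nonneg_left _ hgn.le
        calc ‖S w‖ ≤ ‖S‖ * ‖w‖ := S.le_opNorm w
        _ ≤ 1 / τ * ‖w‖ := mul_le_mul_of_nonneg_right hSnorm (norm_nonneg w)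
  have hfin : a * (m * ‖g‖ ^ 2) + ‖g‖ * (1 / τ * ‖w‖) < 0 := by
    have h1 : a * (m * ‖g‖ ^ 2) = m * (ρ * (‖g‖ * ‖h‖)) := by
      rw [← haρ]; ring
    rw [h1]
    have h2 : ‖g‖ * (1 / τ * ‖w‖) < ‖g‖ * (1 / τ * (-(m * τ * ρ) * ‖h‖)) := by
      apply mul_lt_mul_of_pos_left _ hgn
      exact mul_lt_mul_of_pos_left hwlt (by positivity)
    have h3 : ‖g‖ * (1 / τ * (-(m * τ * ρ) * ‖h‖)) = -(m * (ρ * (‖g‖ * ‖h‖))) := by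
      field_simp
    linarith
  rw [hsum]
  linarith
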